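/- arXiv:1405.6579 — 4 statements merged into one kernel-verified Lean document; each statement's English description precedes it below -/
import Mathlib

section
/- Let n ≥ 1, let i, j ∈ {1,…,n}, let p ∈ ℝⁿ with p ≠ 0, and let f : ℝⁿ\{0} → ℂ be twice continuously differentiable on a neighborhood of p. Then the deformed one-particle coordinate operators satisfy the QFT-Moyal-Weyl commutation relation (A_i(A_j f))(p) − (A_j(A_i f))(p) = 2i (θ_{0i} p_j/‖p‖ − θ_{0j} p_i/‖p‖) f(p) + 2i θ_{ij} f(p); that is, the commutator of the deformed coordinates is the bounded multiplication operator 2i(θ_{0i} V_j − θ_{0j} V_i) + 2i θ_{ij}, where V_j denotes multiplication by the velocity p_j/‖p‖. -/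
open MeasureTheory Real Filter

noncomputable section

/-- ℝⁿ as a Euclidean space. -/
abbrev Eu (n : ℕ) := EuclideanSpace ℝ (Fin n)

/-- Partial derivative ∂f/∂p_j at p. -/
def pd {n : ℕ} (j : Fin n) (f : Eu n → ℂ) (p : Eu n) : ℂ :=
  fderiv ℝ f p (EuclideanSpace.single j 1)

/-- g_μ(p) = θ_{μ0}‖p‖ + Σ_{k=1}^n θ_{μk} p_k. -/
def gθ {n : ℕ} (θ : Fin (n + 1) → Fin (n + 1) → ℝ) (μ : Fin (n + 1)) (p : Eu n) : ℝ :=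
  θ μ 0 * ‖p‖ + ∑ k : Fin n, θ μ k.succ * p k

/-- The deformed one-particle coordinate operator
(A_j f)(p) = −i ∂f/∂p_j(p) − g_0(p)(p_j/‖p‖) f(p) + g_j(p) f(p). -/
def Aop {n : ℕ} (θ : Fin (n + 1) → Fin (n + 1) → ℝ) (j : Fin n) (f : Eu n → ℂ) :
    Eu n → ℂ :=
  fun p => -Complex.I * pd j f p
    - ((gθ θ 0 p * (p j / ‖p‖) : ℝ) : ℂ) * f p + ((gθ θ j.succ p : ℝ) : ℂ) * f p

/-! ### Auxiliary lemmas -/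

lemma hasFDerivAt_norm' {n : ℕ} {p : Eu n} (hp : p ≠ 0) :
    HasFDerivAt (fun q : Eu n => ‖q‖) (‖p‖⁻¹ • innerSL ℝ p) p := by
  have h0 : ‖p‖ ≠ 0 := norm_ne_zero_iff.mpr hp
  have hinner : HasFDerivAt (fun q : Eu n => (inner ℝ q q : ℝ))
      ((fderivInnerCLM ℝ (p, p)).comp ((ContinuousLinearMap.id ℝ (Eu n)).prod
        (ContinuousLinearMap.id ℝ (Eu n)))) p :=
    (hasFDerivAt_id p).inner ℝ (hasFDerivAt_id p)
  have hs : (inner ℝ p p : ℝ) ≠ 0 := by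
    rw [real_inner_self_eq_norm_sq]; exact pow_ne_zero 2 h0
  have hsqrt := (Real.hasDerivAt_sqrt hs).comp_hasFDerivAt
    (f := fun q : Eu n => (inner ℝ q q : ℝ)) p hinner
  have heq : (fun q : Eu n => Real.sqrt (inner ℝ q q : ℝ)) = fun q : Eu n => ‖q‖ := by
    funext q; rw [← Real.sqrt_sq (norm_nonneg q), ← real_inner_self_eq_norm_sq]
  rw [show ((fun x => √x) ∘ fun q : Eu n => (inner ℝ q q : ℝ)) = fun q : Eu n => ‖q‖ from heq]
    at hsqrt
  refine hsqrt.congr_fderiv ?_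
  ext v
  have hss : Real.sqrt (inner ℝ p p : ℝ) = ‖p‖ := by
    rw [real_inner_self_eq_norm_sq, Real.sqrt_sq (norm_nonneg p)]
  rw [hss]
  simp [fderivInnerCLM]
  have hsum : (∑ x : Fin n, v x * p x) = ∑ x : Fin n, p x * v x :=
    Finset.sum_congr rfl fun x _ => mul_comm _ _
  rw [real_inner_comm p v]
  field_simp
  ring

lemma hasProj {n : ℕ} (k : Fin n) (p : Eu n) :
    HasFDerivAt (fun q : Eu n => q k) (EuclideanSpace.proj k : Eu n →L[ℝ] ℝ) p :=
  (EuclideanSpace.proj k : Eu n →L[ℝ] ℝ).hasFDerivAt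

/-- Derivative of gθ. -/
def Dg {n : ℕ} (θ : Fin (n + 1) → Fin (n + 1) → ℝ) (μ : Fin (n + 1)) (p : Eu n) :
    Eu n →L[ℝ] ℝ :=
  θ μ 0 • (‖p‖⁻¹ • innerSL ℝ p) + ∑ k : Fin n, θ μ k.succ • (EuclideanSpace.proj k : Eu n →L[ℝ] ℝ)

lemma hasDg {n : ℕ} (θ : Fin (n + 1) → Fin (n + 1) → ℝ) (μ : Fin (n + 1)) {p : Eu n}
    (hp : p ≠ 0) : HasFDerivAt (gθ θ μ) (Dg θ μ p) p := by
  unfold gθ Dg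
  exact ((hasFDerivAt_norm' hp).const_mul (θ μ 0)).add
    (HasFDerivAt.fun_sum fun k _ => (hasProj k p).const_mul (θ μ k.succ))

/-- Derivative of the velocity q ↦ q j / ‖q‖. -/
def Dv {n : ℕ} (j : Fin n) (p : Eu n) : Eu n →L[ℝ] ℝ :=
  (p j) • (-(‖p‖ ^ 2)⁻¹ • (‖p‖⁻¹ • innerSL ℝ p)) + ‖p‖⁻¹ • (EuclideanSpace.proj j : Eu n →L[ℝ] ℝ)

lemma hasDv {n : ℕ} (j : Fin n) {p : Eu n} (hp : p ≠ 0) :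
    HasFDerivAt (fun q : Eu n => q j / ‖q‖) (Dv j p) p := by
  have h0 : ‖p‖ ≠ 0 := norm_ne_zero_iff.mpr hp
  have hinv : HasFDerivAt (fun q : Eu n => ‖q‖⁻¹) ((-(‖p‖ ^ 2)⁻¹) • (‖p‖⁻¹ • innerSL ℝ p)) p := by
    have := (hasDerivAt_inv h0).comp_hasFDerivAt (f := fun q : Eu n => ‖q‖) p
      (hasFDerivAt_norm' hp)
    simpa [Function.comp_def] using this
  have h1 : HasFDerivAt (fun q : Eu n => q j * ‖q‖⁻¹)
      ((p j) • ((-(‖p‖ ^ 2)⁻¹) • (‖p‖⁻¹ • innerSL ℝ p)) +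
        ‖p‖⁻¹ • (EuclideanSpace.proj j : Eu n →L[ℝ] ℝ)) p :=
    HasFDerivAt.mul (hasProj j p) hinv
  simpa [div_eq_mul_inv, Dv] using h1

/-- Multiplication part of Aop, real version. -/
def Mr {n : ℕ} (θ : Fin (n + 1) → Fin (n + 1) → ℝ) (j : Fin n) (q : Eu n) : ℝ :=
  -(gθ θ 0 q * (q j / ‖q‖)) + gθ θ j.succ q

def DM {n : ℕ} (θ : Fin (n + 1) → Fin (n + 1) → ℝ) (j : Fin n) (p : Eu n) : Eu n →L[ℝ] ℝ :=
  -(gθ θ 0 p • Dv j p + (p j / ‖p‖) • Dg θ 0 p) + Dg θ j.succ p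

lemma hasDM {n : ℕ} (θ : Fin (n + 1) → Fin (n + 1) → ℝ) (j : Fin n) {p : Eu n} (hp : p ≠ 0) :
    HasFDerivAt (Mr θ j) (DM θ j p) p :=
  (((hasDg θ 0 hp).mul (hasDv j hp)).neg).add (hasDg θ j.succ hp)

lemma Dg_apply {n : ℕ} (θ : Fin (n + 1) → Fin (n + 1) → ℝ) (μ : Fin (n + 1)) (p : Eu n)
    (i : Fin n) : Dg θ μ p (EuclideanSpace.single i 1) = θ μ 0 * (‖p‖⁻¹ * p i) + θ μ i.succ := by
  simp [Dg, ContinuousLinearMap.sum_apply, EuclideanSpace.single_apply, real_inner_comm,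
    EuclideanSpace.inner_single_right, Finset.sum_ite_eq, mul_comm]

lemma Dv_apply {n : ℕ} (j : Fin n) (p : Eu n) (i : Fin n) :
    Dv j p (EuclideanSpace.single i 1) =
      p j * (-(‖p‖ ^ 2)⁻¹ * (‖p‖⁻¹ * p i)) + ‖p‖⁻¹ * (if j = i then 1 else 0) := by
  simp [Dv, EuclideanSpace.single_apply, EuclideanSpace.inner_single_right, mul_comm]

lemma key {n : ℕ} (θ : Fin (n + 1) → Fin (n + 1) → ℝ)
    (hθ00 : θ 0 0 = 0)
    (hθ0 : ∀ j : Fin n, θ 0 j.succ = θ j.succ 0)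
    (hθs : ∀ i j : Fin n, θ i.succ j.succ = -θ j.succ i.succ)
    (i j : Fin n) {p : Eu n} (hp : p ≠ 0) :
    DM θ i p (EuclideanSpace.single j 1) - DM θ j p (EuclideanSpace.single i 1) =
      2 * θ 0 i.succ * (p j / ‖p‖) - 2 * θ 0 j.succ * (p i / ‖p‖) + 2 * θ i.succ j.succ := by
  have h0 : ‖p‖ ≠ 0 := norm_ne_zero_iff.mpr hp
  simp only [DM, ContinuousLinearMap.add_apply, ContinuousLinearMap.neg_apply,
    ContinuousLinearMap.smul_apply, smul_eq_mul, Dg_apply, Dv_apply, hθ00,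
    hθ0 i, hθ0 j, hθs i j]
  by_cases hij : i = j
  · subst hij; field_simp; ring
  · have h1 : ¬(i = j) := hij
    have h2 : ¬(j = i) := fun h => hij h.symm
    simp only [h1, h2, if_false]
    field_simp
    ring

/-- QFT-Moyal-Weyl commutation relation of the deformed one-particle coordinate operators:
(A_i(A_j f))(p) − (A_j(A_i f))(p)
  = 2i(θ_{0i} p_j/‖p‖ − θ_{0j} p_i/‖p‖) f(p) + 2i θ_{ij} f(p). -/
theorem stmt0 {n : ℕ} (hn : 1 ≤ n) (θ : Fin (n + 1) → Fin (n + 1) → ℝ)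
    (hθ00 : θ 0 0 = 0)
    (hθ0 : ∀ j : Fin n, θ 0 j.succ = θ j.succ 0)
    (hθs : ∀ i j : Fin n, θ i.succ j.succ = -θ j.succ i.succ)
    (i j : Fin n) (p : Eu n) (hp : p ≠ 0)
    (f : Eu n → ℂ) (hf : ContDiffAt ℝ 2 f p) :
    Aop θ i (Aop θ j f) p - Aop θ j (Aop θ i f) p =
      2 * Complex.I * ((θ 0 i.succ * (p j / ‖p‖) - θ 0 j.succ * (p i / ‖p‖) : ℝ) : ℂ) * f p
        + 2 * Complex.I * ((θ i.succ j.succ : ℝ) : ℂ) * f p := by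
  set e : Fin n → Eu n := fun k => EuclideanSpace.single k 1 with he
  -- pointwise form of Aop
  have Aop_pt : ∀ (k : Fin n) (g : Eu n → ℂ),
      Aop θ k g p = -Complex.I * pd k g p + ((Mr θ k p : ℝ) : ℂ) * g p := by
    intro k g
    simp only [Aop, Mr]
    push_cast
    ring
  have hfd : DifferentiableAt ℝ f p := hf.differentiableAt (by norm_num)
  have hF1 : DifferentiableAt ℝ (fderiv ℝ f) p :=
    (hf.fderiv_right (m := 1) (by norm_num)).differentiableAt (by norm_num)
  -- derivative of the pointwise form
  have hasMc : ∀ k : Fin n, HasFDerivAt (fun q => ((Mr θ k q : ℝ) : ℂ))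
      (Complex.ofRealCLM.comp (DM θ k p)) p := fun k =>
    Complex.ofRealCLM.hasFDerivAt.comp p (hasDM θ k hp)
  have hpdf : ∀ k : Fin n, HasFDerivAt (fun q => fderiv ℝ f q (e k))
      ((ContinuousLinearMap.apply ℝ ℂ (e k)).comp (fderiv ℝ (fderiv ℝ f) p)) p := fun k =>
    (ContinuousLinearMap.apply ℝ ℂ (e k)).hasFDerivAt.comp p hF1.hasFDerivAt
  have hAeq : ∀ k : Fin n, Aop θ k f =
      fun q => -Complex.I * fderiv ℝ f q (e k) + ((Mr θ k q : ℝ) : ℂ) * f q := by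
    intro k
    funext q
    simp only [Aop, pd, Mr, he]
    push_cast
    ring
  have hA : ∀ k : Fin n, HasFDerivAt (Aop θ k f)
      ((-Complex.I) • ((ContinuousLinearMap.apply ℝ ℂ (e k)).comp (fderiv ℝ (fderiv ℝ f) p)) +
        (((Mr θ k p : ℝ) : ℂ) • fderiv ℝ f p +
          f p • (Complex.ofRealCLM.comp (DM θ k p)))) p := by
    intro k
    rw [hAeq k]
    exact ((hpdf k).const_mul (-Complex.I)).add ((hasMc k).mul hfd.hasFDerivAt)
  have hpdA : ∀ m k : Fin n, pd m (Aop θ k f) p =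
      -Complex.I * (fderiv ℝ (fderiv ℝ f) p (e m) (e k)) +
        (((Mr θ k p : ℝ) : ℂ) * fderiv ℝ f p (e m) + f p * ((DM θ k p (e m) : ℝ) : ℂ)) := by
    intro m k
    rw [pd, (hA k).fderiv]
    simp [ContinuousLinearMap.add_apply, ContinuousLinearMap.smul_apply,
      ContinuousLinearMap.comp_apply, ContinuousLinearMap.apply_apply, he, smul_eq_mul]
  have hsym : fderiv ℝ (fderiv ℝ f) p (e j) (e i) = fderiv ℝ (fderiv ℝ f) p (e i) (e j) :=
    (hf.isSymmSndFDerivAt (by simp)) (e j) (e i)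
  have hc := key θ hθ00 hθ0 hθs i j hp
  have hcC := congrArg (fun x : ℝ => (x : ℂ)) hc
  push_cast at hcC
  rw [Aop_pt i (Aop θ j f), Aop_pt j (Aop θ i f), hpdA i j, hpdA j i, Aop_pt j f, Aop_pt i f,
    hsym]
  simp only [pd, he]
  push_cast
  linear_combination Complex.I * f p * hcC

end
end

section
/- For every f ∈ 𝒮(ℝⁿ) (n ≥ 1) and every j ∈ {1,…,n}, the function X₀f is partially differentiable with respect to p_j on ℝⁿ, and X₀(−i ∂f/∂p_j)(p) = −i ∂(X₀f)/∂p_j(p) for all p ∈ ℝⁿ. That is, the temporal coordinate operator X₀ and the spatial coordinate operator X_j = −i ∂/∂p_j commute on Schwartz functions: [X₀, X_j] = 0. -/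
open MeasureTheory Real Filter
open scoped RealInnerProductSpace SchwartzMap FourierTransform

noncomputable section

/-- The Fourier transform (𝓕ψ)(p) = (2π)^{-n/2} ∫ e^{-i⟨p,x⟩} ψ(x) dx. -/
def FT {n : ℕ} (ψ : Eu n → ℂ) (p : Eu n) : ℂ :=
  (Real.sqrt ((2 * Real.pi) ^ n))⁻¹ • ∫ x, Complex.exp (-Complex.I * (⟪p, x⟫ : ℝ)) * ψ x

/-- The inverse Fourier transform (𝓕⁻¹ψ)(x) = (2π)^{-n/2} ∫ e^{i⟨x,p⟩} ψ(p) dp. -/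
def FTinv {n : ℕ} (ψ : Eu n → ℂ) (x : Eu n) : ℂ :=
  (Real.sqrt ((2 * Real.pi) ^ n))⁻¹ • ∫ p, Complex.exp (Complex.I * (⟪x, p⟫ : ℝ)) * ψ p

/-- The one-particle temporal coordinate operator X₀f = 𝓕(x ↦ ‖x‖·(𝓕⁻¹f)(x)). -/
def X0 {n : ℕ} (f : Eu n → ℂ) : Eu n → ℂ :=
  FT (fun x => (‖x‖ : ℂ) * FTinv f x)

/-- Pulling a complex constant out of a Fourier integral. -/
lemma fourier_const_mul {n : ℕ} (c : ℂ) (g : Eu n → ℂ) (p : Eu n) :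
    𝓕 (fun v => c * g v) p = c * 𝓕 g p := by
  simp_rw [Real.fourier_eq', smul_eq_mul, mul_left_comm _ c]
  rw [integral_const_mul]

/-- Pulling a complex constant out of an inverse Fourier integral. -/
lemma fourierInv_const_mul {n : ℕ} (c : ℂ) (g : Eu n → ℂ) (p : Eu n) :
    𝓕⁻ (fun v => c * g v) p = c * 𝓕⁻ g p := by
  simp_rw [Real.fourierInv_eq', smul_eq_mul, mul_left_comm _ c]
  rw [integral_const_mul]

/-- The operator `X0` in terms of the mathlib Fourier transform. -/
lemma X0_eq {n : ℕ} (ψ : Eu n → ℂ) (p : Eu n) :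
    X0 ψ p = (2 * π : ℂ) * 𝓕 (fun y => (‖y‖ : ℂ) * 𝓕⁻ ψ y) p := by
  have h2π : (0:ℝ) < 2 * π := by positivity
  set c : ℝ := (Real.sqrt ((2 * π) ^ n))⁻¹ with hc
  have hFTinv : ∀ x : Eu n, FTinv ψ x = c • (𝓕⁻ ψ ((2 * π)⁻¹ • x)) := by
    intro x
    rw [FTinv, Real.fourierInv_eq']
    congr 1
    congr 1
    funext v
    rw [smul_eq_mul]
    congr 2
    have h1 : 2 * π * ⟪v, (2 * π)⁻¹ • x⟫ = ⟪x, v⟫ := by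
      rw [real_inner_smul_right, real_inner_comm]
      field_simp
    rw [h1, mul_comm]
  set Φ : Eu n → ℂ := fun y =>
    (2 * π : ℂ) * (Complex.exp ((-2 * π * ⟪y, p⟫ : ℝ) * Complex.I) *
      ((‖y‖ : ℂ) * 𝓕⁻ ψ y)) with hΦ
  have hΦint : ∫ y, Φ y = (2 * π : ℂ) * 𝓕 (fun y => (‖y‖ : ℂ) * 𝓕⁻ ψ y) p := by
    rw [Real.fourier_eq']
    simp_rw [smul_eq_mul]
    rw [← integral_const_mul]
  have h2πC : (2 * π : ℂ) ≠ 0 := by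
    exact_mod_cast ne_of_gt h2π
  have hcomp : (fun x : Eu n => Complex.exp (-Complex.I * (⟪p, x⟫ : ℝ)) *
      ((‖x‖ : ℂ) * FTinv ψ x)) = fun x => c • Φ ((2 * π)⁻¹ • x) := by
    funext x
    rw [hFTinv x, hΦ]
    beta_reduce
    have h1 : ⟪(2 * π)⁻¹ • x, p⟫ = (2 * π)⁻¹ * ⟪x, p⟫ := real_inner_smul_left _ _ _
    have h2 : (-2 * π * ((2 * π)⁻¹ * ⟪x, p⟫) : ℝ) = -⟪x, p⟫ := by field_simp
    have h3 : ‖(2 * π)⁻¹ • x‖ = (2 * π)⁻¹ * ‖x‖ := by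
      rw [norm_smul, Real.norm_eq_abs, abs_of_pos (inv_pos.2 h2π)]
    rw [Complex.real_smul, Complex.real_smul, h1, h2, h3]
    have h4 : -Complex.I * (⟪p, x⟫ : ℝ) = ((-⟪x, p⟫ : ℝ) : ℂ) * Complex.I := by
      rw [real_inner_comm p x]
      push_cast
      ring
    rw [h4]
    push_cast
    field_simp
  rw [X0, FT, hcomp, integral_smul, MeasureTheory.Measure.integral_comp_smul volume Φ ((2 * π)⁻¹)]
  have hrank : Module.finrank ℝ (Eu n) = n := finrank_euclideanSpace_fin
  rw [hrank]
  have habs : |(((2 * π)⁻¹ : ℝ) ^ n)⁻¹| = (2 * π) ^ n := by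
    rw [inv_pow, inv_inv, abs_of_pos (pow_pos h2π n)]
  rw [habs, hΦint, smul_smul, smul_smul]
  have hsqrt : Real.sqrt ((2 * π) ^ n) ^ 2 = (2 * π) ^ n :=
    Real.sq_sqrt (by positivity)
  have hsne : Real.sqrt ((2 * π) ^ n) ≠ 0 :=
    ne_of_gt (Real.sqrt_pos.2 (by positivity))
  have hone : (Real.sqrt ((2 * π) ^ n))⁻¹ * c * (2 * π) ^ n = 1 := by
    rw [hc, ← hsqrt]
    field_simp
    rw [Real.sqrt_sq (Real.sqrt_nonneg _)]
  rw [hone, one_smul]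

/-- The temporal coordinate operator X₀ and the spatial coordinate operator
X_j = −i ∂/∂p_j commute on Schwartz functions: X₀f is partially differentiable with
respect to p_j and X₀(−i ∂f/∂p_j) = −i ∂(X₀f)/∂p_j. -/
theorem stmt2 {n : ℕ} (hn : 1 ≤ n) (f : 𝓢(Eu n, ℂ)) (j : Fin n) :
    (∀ p : Eu n, LineDifferentiableAt ℝ (X0 (f : Eu n → ℂ)) p (EuclideanSpace.single j 1)) ∧
      (∀ p : Eu n,
        X0 (fun q => -Complex.I * fderiv ℝ (f : Eu n → ℂ) q (EuclideanSpace.single j 1)) p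
          = -Complex.I * lineDeriv ℝ (X0 (f : Eu n → ℂ)) p (EuclideanSpace.single j 1)) := by
  set m : Eu n := EuclideanSpace.single j 1 with hm
  set h₀ : 𝓢(Eu n, ℂ) := (FourierTransform.fourierCLE ℂ 𝓢(Eu n, ℂ)).symm f with hh₀
  have h₀eq : 𝓕⁻ (f : Eu n → ℂ) = ⇑h₀ := by
    rw [hh₀, FourierTransform.fourierCLE_symm_apply, SchwartzMap.fourierInv_coe]
  set H : Eu n → ℂ := fun y => (‖y‖ : ℂ) * h₀ y with hH
  have hHc : Continuous H := (Complex.continuous_ofReal.comp continuous_norm).mul h₀.continuous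
  have hHnorm : ∀ y, ‖H y‖ = ‖y‖ * ‖h₀ y‖ := by
    intro y; simp [hH]
  have hH1 : Integrable H := by
    refine (h₀.integrable_pow_mul volume 1).mono' hHc.aestronglyMeasurable
      (ae_of_all _ fun y => ?_)
    rw [hHnorm y, pow_one]
  have hH2 : Integrable (fun v => ‖v‖ * ‖H v‖) := by
    refine (h₀.integrable_pow_mul volume 2).congr (ae_of_all _ fun v => ?_)
    show ‖v‖ ^ 2 * ‖h₀ v‖ = ‖v‖ * ‖H v‖
    rw [hHnorm v]; ring
  have hXf : X0 (f : Eu n → ℂ) = fun p => (2 * π : ℂ) * 𝓕 H p := by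
    funext p
    rw [X0_eq, h₀eq]
  have hder : ∀ p : Eu n, HasFDerivAt (X0 (f : Eu n → ℂ))
      ((2 * π : ℂ) • 𝓕 (VectorFourier.fourierSMulRight (innerSL ℝ) H) p) p := by
    intro p
    rw [hXf]
    exact (Real.hasFDerivAt_fourier hH1 hH2 p).const_mul _
  refine ⟨fun p => ((hder p).hasLineDerivAt m).lineDifferentiableAt, fun p => ?_⟩
  have hlineDeriv : lineDeriv ℝ (X0 (f : Eu n → ℂ)) p m
      = (2 * π : ℂ) * (𝓕 (VectorFourier.fourierSMulRight (innerSL ℝ) H) p m) := by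
    rw [((hder p).hasLineDerivAt m).lineDeriv]
    simp
  have hFSR : Integrable (fun v => VectorFourier.fourierSMulRight (innerSL ℝ) H v) := by
    refine (hH2.const_mul (2 * π * ‖(innerSL ℝ : Eu n →L[ℝ] Eu n →L[ℝ] ℝ)‖)).mono'
      (hH1.aestronglyMeasurable.fourierSMulRight) (ae_of_all _ fun v => ?_)
    calc ‖VectorFourier.fourierSMulRight (innerSL ℝ) H v‖
        ≤ 2 * π * ‖(innerSL ℝ : Eu n →L[ℝ] Eu n →L[ℝ] ℝ)‖ * ‖v‖ * ‖H v‖ :=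
          VectorFourier.norm_fourierSMulRight_le _ _ _
      _ = 2 * π * ‖(innerSL ℝ : Eu n →L[ℝ] Eu n →L[ℝ] ℝ)‖ * (‖v‖ * ‖H v‖) := by ring
  have happly : 𝓕 (VectorFourier.fourierSMulRight (innerSL ℝ) H) p m
      = 𝓕 (fun v => -(2 * π * Complex.I) • ((⟪v, m⟫ : ℝ) • H v)) p := by
    rw [Real.fourier_continuousLinearMap_apply hFSR]
    congr 1
  have hfderiv_int : Integrable (fderiv ℝ (f : Eu n → ℂ)) := by
    refine ((SchwartzMap.fderivCLM ℝ (Eu n) ℂ f).integrable (μ := volume)).congr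
      (ae_of_all _ fun x => ?_)
    exact SchwartzMap.fderivCLM_apply ℝ f x
  have hFfd : 𝓕 (fderiv ℝ (f : Eu n → ℂ))
      = VectorFourier.fourierSMulRight (-(innerSL ℝ)) (𝓕 (f : Eu n → ℂ)) :=
    Real.fourier_fderiv f.integrable f.differentiable hfderiv_int
  have hFneg : ∀ y : Eu n, 𝓕 (f : Eu n → ℂ) (-y) = h₀ y := by
    intro y
    rw [← Real.fourierInv_eq_fourier_neg, h₀eq]
  have hinvg : ∀ y : Eu n, 𝓕⁻ (fun q => -Complex.I * fderiv ℝ (f : Eu n → ℂ) q m) y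
      = -Complex.I * (-(2 * π * Complex.I) • ((⟪y, m⟫ : ℝ) • h₀ y)) := by
    intro y
    rw [fourierInv_const_mul]
    congr 1
    have e2 : 𝓕⁻ (fun q => fderiv ℝ (f : Eu n → ℂ) q m) y
        = (𝓕 (fderiv ℝ (f : Eu n → ℂ)) (-y)) m := by
      rw [Real.fourierInv_eq_fourier_neg,
        Real.fourier_continuousLinearMap_apply hfderiv_int]
    rw [e2, hFfd, VectorFourier.fourierSMulRight_apply]
    rw [hFneg y]
    congr 2
    simp [real_inner_comm, innerSL_apply_apply]
    rfl
  rw [X0_eq, hlineDeriv, happly]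
  have hfun : (fun y : Eu n => (‖y‖ : ℂ) * 𝓕⁻ (fun q => -Complex.I *
      fderiv ℝ (f : Eu n → ℂ) q m) y)
      = fun v : Eu n => -Complex.I * (-(2 * π * Complex.I) • ((⟪v, m⟫ : ℝ) • H v)) := by
    funext v
    rw [hinvg v, hH]
    simp only [smul_eq_mul, Complex.real_smul]
    ring
  rw [hfun]
  have : (fun v : Eu n => -Complex.I * (-(2 * π * Complex.I) • ((⟪v, m⟫ : ℝ) • H v)))
      = fun v : Eu n => -Complex.I * ((-(2 * π * Complex.I)) * (((⟪v, m⟫ : ℝ) : ℂ) * H v)) := by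
    funext v
    simp [Complex.real_smul, smul_eq_mul]
  rw [this, fourier_const_mul]
  have : (fun v : Eu n => -(2 * π * Complex.I) • ((⟪v, m⟫ : ℝ) • H v))
      = fun v : Eu n => (-(2 * π * Complex.I)) * (((⟪v, m⟫ : ℝ) : ℂ) * H v) := by
    funext v
    simp [Complex.real_smul, smul_eq_mul]
  rw [this]
  ring

end
end

section
/- Let n ≥ 1 and let f : ℝⁿ → ℂ be continuous with compact support not containing 0, and set h(q) := (2‖q‖)^{−1/2} f(q). Then ∫_{ℝⁿ} |(𝓕h)(p)|² dp = ∫_{ℝⁿ} |f(p)|² dμ(p). Consequently the weighted Fourier transform U_{𝓕,ω} f := p ↦ √(2‖p‖) · 𝓕( q ↦ (2‖q‖)^{−1/2} f(q) )(p) satisfies ‖U_{𝓕,ω} f‖_{L²(μ)} = ‖f‖_{L²(μ)}, i.e. it is isometric with respect to the Lorentz-invariant measure. -/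
open MeasureTheory Real Filter Complex
open scoped RealInnerProductSpace FourierTransform ComplexConjugate NNReal ENNReal

noncomputable section

def lorentzMeasure (n : ℕ) : Measure (Eu n) :=
  (volume : Measure (Eu n)).withDensity fun p => ENNReal.ofReal (2 * ‖p‖)⁻¹

variable {n : ℕ}

theorem flip_innerl : (innerₗ (Eu n)).flip = innerₗ (Eu n) := by
  ext v w
  exact real_inner_comm v w

theorem integrable_gauss_c {b : ℂ} (hb : 0 < b.re) :
    Integrable (fun v : Eu n => cexp (-b * ‖v‖ ^ 2)) := by
  have := GaussianFourier.integrable_cexp_neg_mul_sq_norm_add (V := Eu n) hb 0 (0 : Eu n)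
  simpa using this

theorem integrable_gauss_r {c : ℝ} (hc : 0 < c) :
    Integrable (fun v : Eu n => rexp (-c * ‖v‖ ^ 2)) := by
  have := (integrable_gauss_c (n := n) (b := (c:ℂ)) (by simpa using hc)).norm
  refine this.congr (Filter.Eventually.of_forall fun v => ?_)
  simp [Complex.norm_exp, ← Complex.ofReal_pow]

theorem norm_cexp_gauss (c : ℝ) (z : Eu n) :
    ‖cexp (-(c:ℂ) * ‖z‖ ^ 2)‖ = rexp (-c * ‖z‖ ^ 2) := by
  rw [Complex.norm_exp]
  congr 1
  rw [← Complex.ofReal_pow, ← Complex.ofReal_neg, ← Complex.ofReal_mul, Complex.ofReal_re]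

theorem key_identity (h : Eu n → ℂ) (hc : Continuous h) (hcs : HasCompactSupport h)
    {t : ℝ} (ht : 0 < t) :
    ((∫ ξ : Eu n, ‖𝓕 h ξ‖ ^ 2 * rexp (-(Real.pi * t) * ‖ξ‖ ^ 2) : ℝ) : ℂ)
      = ∫ q : Eu n × Eu n,
          conj (h q.1) * (h (q.1 - Real.sqrt t • q.2) * cexp (-(Real.pi:ℂ) * ‖q.2‖ ^ 2)) := by
  have hi : Integrable h := hc.integrable_of_hasCompactSupport hcs
  have Fcont : Continuous (𝓕 h) :=
    VectorFourier.fourierIntegral_continuous Real.continuous_fourierChar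
      (by exact continuous_inner) hi
  have FB : ∀ ξ : Eu n, ‖𝓕 h ξ‖ ≤ ∫ x, ‖h x‖ := fun ξ =>
    VectorFourier.norm_fourierIntegral_le_integral_norm _ _ _ _ _
  set b : ℂ := ((Real.pi * t : ℝ) : ℂ) with hbdef
  have hb : 0 < b.re := by
    simp only [hbdef, Complex.ofReal_re]
    positivity
  set g : Eu n → Eu n → ℂ :=
    fun y ξ => cexp (-b * ‖ξ‖ ^ 2 + 2 * Real.pi * Complex.I * (⟪y, ξ⟫ : ℝ)) with hgdef
  have hg_int : ∀ y, Integrable (g y) := fun y =>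
    GaussianFourier.integrable_cexp_neg_mul_sq_norm_add hb (2 * Real.pi * Complex.I) y
  have hgnorm : ∀ y ξ, ‖g y ξ‖ = rexp (-(Real.pi * t) * ‖ξ‖ ^ 2) := by
    intro y ξ
    rw [hgdef, Complex.norm_exp]
    congr 1
    simp [Complex.add_re, Complex.mul_re, Complex.mul_im, Complex.I_re, Complex.I_im,
      Complex.ofReal_re, Complex.ofReal_im, ← Complex.ofReal_pow, hbdef]
  -- Step A+B+C : express as double integral
  have stepC : ((∫ ξ : Eu n, ‖𝓕 h ξ‖ ^ 2 * rexp (-(Real.pi * t) * ‖ξ‖ ^ 2) : ℝ) : ℂ)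
      = ∫ ξ : Eu n, ∫ y : Eu n, conj (h y) * (g y ξ * 𝓕 h ξ) := by
    have hBc : ∀ ξ : Eu n, conj (𝓕 h ξ)
        = ∫ y : Eu n, cexp (2 * Real.pi * Complex.I * (⟪y, ξ⟫ : ℝ)) * conj (h y) := by
      intro ξ
      rw [Real.fourier_eq', ← integral_conj]
      congr 1
      funext v
      rw [smul_eq_mul, map_mul, ← Complex.exp_conj]
      congr 1
      rw [map_mul, Complex.conj_I, Complex.conj_ofReal]
      push_cast
      ring
    have hA : ∀ ξ : Eu n, ((‖𝓕 h ξ‖ ^ 2 * rexp (-(Real.pi * t) * ‖ξ‖ ^ 2) : ℝ) : ℂ)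
        = conj (𝓕 h ξ) * (cexp (-b * ‖ξ‖ ^ 2) * 𝓕 h ξ) := by
      intro ξ
      have h1 : conj (𝓕 h ξ) * 𝓕 h ξ = ((‖𝓕 h ξ‖ ^ 2 : ℝ) : ℂ) := by
        rw [mul_comm, Complex.mul_conj']
        norm_cast
      have h2 : ((-(Real.pi * t) * ‖ξ‖ ^ 2 : ℝ) : ℂ) = -b * ‖ξ‖ ^ 2 := by
        rw [hbdef]; push_cast; ring
      rw [Complex.ofReal_mul, Complex.ofReal_exp, h2, ← h1]
      ring
    refine Eq.trans ((integral_ofReal (𝕜 := ℂ)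
      (f := fun ξ : Eu n => ‖𝓕 h ξ‖ ^ 2 * rexp (-(Real.pi * t) * ‖ξ‖ ^ 2))).symm) ?_
    have step1 : (∫ ξ : Eu n, ((‖𝓕 h ξ‖ ^ 2 * rexp (-(Real.pi * t) * ‖ξ‖ ^ 2) : ℝ) : ℂ))
        = ∫ ξ : Eu n, (∫ y : Eu n, cexp (2 * Real.pi * Complex.I * (⟪y, ξ⟫ : ℝ)) * conj (h y))
            * (cexp (-b * ‖ξ‖ ^ 2) * 𝓕 h ξ) := by
      refine integral_congr_ae (Filter.Eventually.of_forall fun ξ => ?_)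
      show ((‖𝓕 h ξ‖ ^ 2 * rexp (-(Real.pi * t) * ‖ξ‖ ^ 2) : ℝ) : ℂ) = _
      rw [hA, hBc]
    refine Eq.trans step1 ?_
    congr 1
    funext ξ
    rw [← MeasureTheory.integral_mul_const]
    congr 1
    funext y
    rw [hgdef]
    show cexp (2 * Real.pi * Complex.I * (⟪y, ξ⟫ : ℝ)) * conj (h y)
        * (cexp (-b * ‖ξ‖ ^ 2) * 𝓕 h ξ)
      = conj (h y) * (cexp (-b * ‖ξ‖ ^ 2 + 2 * Real.pi * Complex.I * (⟪y, ξ⟫ : ℝ)) * 𝓕 h ξ)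
    rw [Complex.exp_add]
    ring
  rw [stepC]
  -- Step D : swap
  have stepD : (∫ ξ : Eu n, ∫ y : Eu n, conj (h y) * (g y ξ * 𝓕 h ξ))
      = ∫ y : Eu n, ∫ ξ : Eu n, conj (h y) * (g y ξ * 𝓕 h ξ) := by
    set C : ℝ := ∫ x : Eu n, ‖h x‖ with hC
    have hCnn : 0 ≤ C := integral_nonneg fun x => norm_nonneg _
    refine MeasureTheory.integral_integral_swap ?_
    have hcont2 : Continuous (Function.uncurry fun ξ y : Eu n =>
        conj (h y) * (g y ξ * 𝓕 h ξ)) := by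
      refine (Complex.continuous_conj.comp (hc.comp continuous_snd)).mul ?_
      refine Continuous.mul ?_ (Fcont.comp continuous_fst)
      rw [hgdef]
      refine Complex.continuous_exp.comp (Continuous.add ?_ ?_)
      · exact (continuous_const.mul ((Complex.continuous_ofReal.comp
          (continuous_norm.comp continuous_fst)).pow 2))
      · exact continuous_const.mul (Complex.continuous_ofReal.comp
          (continuous_inner.comp (continuous_snd.prodMk continuous_fst)))
    refine ((((integrable_gauss_r (n := n) (by positivity : (0:ℝ) < Real.pi * t)).mul_const
      C).mul_prod hi.norm).mono' hcont2.aestronglyMeasurable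
      (Filter.Eventually.of_forall fun z => ?_))
    rw [Function.uncurry]
    rw [norm_mul, norm_mul, RCLike.norm_conj, hgnorm]
    calc ‖h z.2‖ * (rexp (-(Real.pi * t) * ‖z.1‖ ^ 2) * ‖𝓕 h z.1‖)
        ≤ ‖h z.2‖ * (rexp (-(Real.pi * t) * ‖z.1‖ ^ 2) * C) :=
          mul_le_mul_of_nonneg_left
            (mul_le_mul_of_nonneg_left (FB z.1) (Real.exp_nonneg _)) (norm_nonneg _)
      _ = rexp (-(Real.pi * t) * ‖z.1‖ ^ 2) * C * ‖h z.2‖ := by ring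
  rw [stepD]
  -- Step E : multiplication formula + Gaussian Fourier transform
  set K : ℂ := ((Real.pi : ℂ) / b) ^ ((n : ℂ) / 2) with hKdef
  have stepE : ∀ y : Eu n, (∫ ξ : Eu n, g y ξ * 𝓕 h ξ)
      = ∫ x : Eu n, h x * (K * cexp (-(Real.pi:ℂ) ^ 2 * ‖y - x‖ ^ 2 / b)) := by
    intro y
    have hL : Continuous fun p : Eu n × Eu n => (innerₗ (Eu n)) p.1 p.2 := by
      exact continuous_inner
    have hmain : (∫ ξ : Eu n, 𝓕 h ξ * g y ξ) = ∫ x : Eu n, h x *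
        (VectorFourier.fourierIntegral 𝐞 volume (innerₗ (Eu n)).flip (g y) x) := by
      have := VectorFourier.integral_bilin_fourierIntegral_eq_flip
        (ContinuousLinearMap.mul ℂ ℂ) Real.continuous_fourierChar hL hi (hg_int y)
      simp at this ⊢; exact this
    rw [flip_innerl] at hmain
    have hgauss : ∀ x : Eu n, VectorFourier.fourierIntegral 𝐞 volume (innerₗ (Eu n)) (g y) x
        = K * cexp (-(Real.pi:ℂ) ^ 2 * ‖y - x‖ ^ 2 / b) := by
      intro x
      have hg2 := fourier_gaussian_innerProductSpace' (V := Eu n) hb y x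
      rw [finrank_euclideanSpace_fin] at hg2
      exact hg2
    simp_rw [hgauss] at hmain
    simp_rw [mul_comm (g y _) (𝓕 h _)]
    exact hmain
  -- Step F : substitution
  have stepF : ∀ y : Eu n, (∫ x : Eu n, h x * (K * cexp (-(Real.pi:ℂ) ^ 2 * ‖y - x‖ ^ 2 / b)))
      = ∫ z : Eu n, h (y - Real.sqrt t • z) * cexp (-(Real.pi:ℂ) * ‖z‖ ^ 2) := by
    intro y
    have htne : (t : ℝ) ≠ 0 := ht.ne'
    set c : ℝ := Real.pi / t with hcdef
    have hexp : ∀ v : Eu n, -(Real.pi:ℂ) ^ 2 * ‖v‖ ^ 2 / b = ((-c * ‖v‖ ^ 2 : ℝ) : ℂ) := by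
      intro v
      rw [hbdef, hcdef]
      push_cast
      have : (t : ℂ) ≠ 0 := by exact_mod_cast htne
      have hπ : (Real.pi : ℂ) ≠ 0 := by exact_mod_cast Real.pi_ne_zero
      field_simp
    set Ψ : Eu n → ℂ := fun u => h (y - u) * cexp (((-c * ‖u‖ ^ 2 : ℝ) : ℂ)) with hΨdef
    have hpt1 : ∀ x : Eu n, h x * (K * cexp (-(Real.pi:ℂ) ^ 2 * ‖y - x‖ ^ 2 / b))
        = K * Ψ (y - x) := by
      intro x
      rw [hexp, hΨdef]
      simp only [sub_sub_cancel]
      ring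
    simp_rw [hpt1]
    rw [MeasureTheory.integral_const_mul]
    -- translation invariance
    have htrans : (∫ x : Eu n, Ψ (y - x)) = ∫ u : Eu n, Ψ u := by
      have h1 : (fun x : Eu n => Ψ (y - x)) = fun x : Eu n => (fun u => Ψ (-u)) (x - y) := by
        funext x
        simp [neg_sub]
      rw [h1, MeasureTheory.integral_sub_right_eq_self (fun u : Eu n => Ψ (-u)) y]
      exact MeasureTheory.integral_neg_eq_self Ψ volume
    rw [htrans]
    -- scaling
    have hst : 0 < Real.sqrt t := Real.sqrt_pos.2 ht
    have hscale := MeasureTheory.Measure.integral_comp_smul (volume : Measure (Eu n)) Ψ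
      (Real.sqrt t)
    rw [finrank_euclideanSpace_fin, abs_of_pos (by positivity)] at hscale
    have hint : (∫ u : Eu n, Ψ u) = (Real.sqrt t ^ n : ℝ) • ∫ z : Eu n, Ψ (Real.sqrt t • z) := by
      rw [hscale, smul_smul, mul_inv_cancel₀ (by positivity), one_smul]
    rw [hint]
    have hpt2 : ∀ z : Eu n, Ψ (Real.sqrt t • z)
        = h (y - Real.sqrt t • z) * cexp (-(Real.pi:ℂ) * ‖z‖ ^ 2) := by
      intro z
      show h (y - Real.sqrt t • z) * cexp (((-c * ‖Real.sqrt t • z‖ ^ 2 : ℝ) : ℂ)) = _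
      congr 2
      rw [norm_smul, Real.norm_eq_abs, _root_.abs_of_nonneg (Real.sqrt_nonneg t), mul_pow,
        Real.sq_sqrt ht.le, hcdef]
      push_cast
      have ht' : (t : ℂ) ≠ 0 := by exact_mod_cast htne
      field_simp
    simp_rw [hpt2]
    have hK1 : K * ((Real.sqrt t ^ n : ℝ) : ℂ) = 1 := by
      have h1 : ((Real.pi : ℂ) / b) = (((t⁻¹ : ℝ)) : ℂ) := by
        rw [hbdef]
        push_cast
        have hπ : (Real.pi : ℂ) ≠ 0 := by exact_mod_cast Real.pi_ne_zero
        have ht' : (t : ℂ) ≠ 0 := by exact_mod_cast htne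
        field_simp
      have hexp2 : ((n:ℂ)/2) = (((n:ℝ)/2 : ℝ) : ℂ) := by push_cast; ring
      have h2 : K = ((((t⁻¹) ^ ((n : ℝ) / 2) : ℝ)) : ℂ) := by
        rw [hKdef, h1, hexp2, ← Complex.ofReal_cpow (by positivity) ((n : ℝ) / 2)]
      have h3 : (Real.sqrt t ^ n : ℝ) = t ^ ((n : ℝ) / 2) := by
        rw [Real.sqrt_eq_rpow, ← Real.rpow_natCast (t ^ ((1:ℝ)/2)) n, ← Real.rpow_mul ht.le]
        congr 1
        ring
      have h4 : (t⁻¹) ^ ((n : ℝ) / 2) * t ^ ((n : ℝ) / 2) = 1 := by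
        rw [← Real.mul_rpow (by positivity) ht.le, inv_mul_cancel₀ htne, Real.one_rpow]
      rw [h2, h3, ← Complex.ofReal_mul, h4, Complex.ofReal_one]
    rw [Complex.real_smul, ← mul_assoc, hK1, one_mul]
  -- Step G : conclude
  obtain ⟨M, hM⟩ := hc.bounded_above_of_compact_support hcs
  simp_rw [MeasureTheory.integral_const_mul, stepE, stepF, ← MeasureTheory.integral_const_mul]
  have hint : Integrable (Function.uncurry fun y z : Eu n =>
      conj (h y) * (h (y - Real.sqrt t • z) * cexp (-(Real.pi:ℂ) * ‖z‖ ^ 2)))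
      ((volume : Measure (Eu n)).prod volume) := by
    have hcont2 : Continuous (Function.uncurry fun y z : Eu n =>
        conj (h y) * (h (y - Real.sqrt t • z) * cexp (-(Real.pi:ℂ) * ‖z‖ ^ 2))) := by
      refine (Complex.continuous_conj.comp (hc.comp continuous_fst)).mul ?_
      refine (hc.comp (continuous_fst.sub ((continuous_const : Continuous fun _ : Eu n × Eu n => Real.sqrt t).smul continuous_snd))).mul ?_
      exact Complex.continuous_exp.comp
        ((continuous_const.mul ((Complex.continuous_ofReal.comp
          (continuous_norm.comp continuous_snd)).pow 2)))
    refine (hi.norm.mul_prod ((integrable_gauss_r (n := n) Real.pi_pos).const_mul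
      M)).mono' hcont2.aestronglyMeasurable (Filter.Eventually.of_forall fun q => ?_)
    rw [Function.uncurry]
    rw [norm_mul, norm_mul, RCLike.norm_conj, norm_cexp_gauss]
    exact mul_le_mul_of_nonneg_left
      (mul_le_mul_of_nonneg_right (hM _) (Real.exp_nonneg _)) (norm_nonneg _)
  have := MeasureTheory.integral_integral hint
  rw [this, ← MeasureTheory.Measure.volume_eq_prod]

theorem gauss_total : ∫ v : Eu n, cexp (-(Real.pi:ℂ) * ‖v‖ ^ 2) = 1 := by
  rw [GaussianFourier.integral_cexp_neg_mul_sq_norm (by simpa using Real.pi_pos)]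
  rw [div_self (by exact_mod_cast Real.pi_ne_zero), Complex.one_cpow]

theorem plancherel_ccs (h : Eu n → ℂ) (hc : Continuous h) (hcs : HasCompactSupport h) :
    ∫ ξ : Eu n, ‖𝓕 h ξ‖ ^ 2 = ∫ x : Eu n, ‖h x‖ ^ 2 := by
  have hi : Integrable h := hc.integrable_of_hasCompactSupport hcs
  obtain ⟨M, hM⟩ := hc.bounded_above_of_compact_support hcs
  have Fcont : Continuous (𝓕 h) :=
    VectorFourier.fourierIntegral_continuous Real.continuous_fourierChar
      (by exact continuous_inner) hi
  have FB : ∀ ξ : Eu n, ‖𝓕 h ξ‖ ≤ ∫ x, ‖h x‖ := fun ξ =>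
    VectorFourier.norm_fourierIntegral_le_integral_norm _ _ _ _ _
  set S : ℝ := ∫ x : Eu n, ‖h x‖ ^ 2 with hS
  -- the key identity, for each t > 0
  have key : ∀ t : ℝ, 0 < t →
      ((∫ ξ : Eu n, ‖𝓕 h ξ‖ ^ 2 * rexp (-(Real.pi * t) * ‖ξ‖ ^ 2) : ℝ) : ℂ)
        = ∫ q : Eu n × Eu n,
            conj (h q.1) * (h (q.1 - Real.sqrt t • q.2) * cexp (-(Real.pi:ℂ) * ‖q.2‖ ^ 2)) :=
    fun t ht => key_identity h hc hcs ht
  -- limit of RHS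
  have lim1 : Tendsto (fun k : ℕ =>
      ∫ q : Eu n × Eu n, conj (h q.1) *
        (h (q.1 - Real.sqrt (1 / (k + 1)) • q.2) * cexp (-(Real.pi:ℂ) * ‖q.2‖ ^ 2)))
      atTop (nhds (S : ℂ)) := by
    have hM0 : 0 ≤ M := (norm_nonneg (h 0)).trans (hM 0)
    have hlimint : (∫ q : Eu n × Eu n,
        conj (h q.1) * (h q.1 * cexp (-(Real.pi:ℂ) * ‖q.2‖ ^ 2))) = (S : ℂ) := by
      have hpt : ∀ q : Eu n × Eu n, conj (h q.1) * (h q.1 * cexp (-(Real.pi:ℂ) * ‖q.2‖ ^ 2))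
          = (fun y : Eu n => ((‖h y‖ ^ 2 : ℝ) : ℂ)) q.1
            * (fun z : Eu n => cexp (-(Real.pi:ℂ) * ‖z‖ ^ 2)) q.2 := by
        intro q
        rw [← mul_assoc]
        congr 1
        rw [mul_comm, Complex.mul_conj']
        norm_cast
      simp_rw [hpt]
      rw [MeasureTheory.Measure.volume_eq_prod]
      have hprod := MeasureTheory.integral_prod_mul (μ := (volume : Measure (Eu n)))
        (ν := (volume : Measure (Eu n))) (f := fun y : Eu n => ((‖h y‖ ^ 2 : ℝ) : ℂ))
        (g := fun z : Eu n => cexp (-(Real.pi:ℂ) * ‖z‖ ^ 2))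
      rw [hprod, gauss_total, mul_one]
      exact integral_ofReal (𝕜 := ℂ) (f := fun x : Eu n => ‖h x‖ ^ 2)
    rw [← hlimint]
    refine tendsto_integral_of_dominated_convergence
      (fun q : Eu n × Eu n => ‖h q.1‖ * (M * rexp (-Real.pi * ‖q.2‖ ^ 2))) ?_ ?_ ?_ ?_
    · intro k
      apply Continuous.aestronglyMeasurable
      refine (Complex.continuous_conj.comp (hc.comp continuous_fst)).mul ?_
      refine ((hc.comp (continuous_fst.sub ((continuous_const : Continuous fun _ : Eu n × Eu n => Real.sqrt (1 / ((k:ℝ) + 1))).smul continuous_snd))).mul ?_)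
      exact Complex.continuous_exp.comp
        ((continuous_const.mul ((Complex.continuous_ofReal.comp
          (continuous_norm.comp continuous_snd)).pow 2)))
    · have := hi.norm.mul_prod ((integrable_gauss_r (n := n) Real.pi_pos).const_mul M)
      rw [MeasureTheory.Measure.volume_eq_prod]
      exact this
    · intro k
      refine Filter.Eventually.of_forall fun q => ?_
      rw [norm_mul, norm_mul, RCLike.norm_conj, norm_cexp_gauss]
      exact mul_le_mul_of_nonneg_left
        (mul_le_mul_of_nonneg_right (hM _) (Real.exp_nonneg _)) (norm_nonneg _)
    · refine Filter.Eventually.of_forall fun q => ?_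
      have hs : Tendsto (fun k : ℕ => Real.sqrt (1 / (k + 1))) atTop (nhds 0) := by
        have h1 : Tendsto (fun k : ℕ => Real.sqrt (1 / (k + 1))) atTop
            (nhds (Real.sqrt 0)) :=
          (Real.continuous_sqrt.tendsto 0).comp tendsto_one_div_add_atTop_nhds_zero_nat
        rwa [Real.sqrt_zero] at h1
      have harg : Tendsto (fun k : ℕ => q.1 - Real.sqrt (1 / (k + 1)) • q.2) atTop
          (nhds q.1) := by
        have h2 := Tendsto.sub
          (tendsto_const_nhds : Tendsto (fun _ : ℕ => q.1) atTop (nhds q.1))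
          (hs.smul_const q.2)
        simpa using h2
      exact tendsto_const_nhds.mul (((hc.tendsto q.1).comp harg).mul tendsto_const_nhds)
  -- hence limit of LHS (real)
  have lim2 : Tendsto (fun k : ℕ =>
      ∫ ξ : Eu n, ‖𝓕 h ξ‖ ^ 2 * rexp (-(Real.pi * (1 / (k + 1))) * ‖ξ‖ ^ 2))
      atTop (nhds S) := by
    have hpos : ∀ k : ℕ, (0:ℝ) < 1 / (k + 1) := fun k => by positivity
    have := lim1.congr fun k => (key _ (hpos k)).symm
    have hre := (Complex.continuous_re.tendsto _).comp this
    simpa [Function.comp_def] using hre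
  -- monotone convergence
  have mct : Tendsto (fun k : ℕ => ENNReal.ofReal
      (∫ ξ : Eu n, ‖𝓕 h ξ‖ ^ 2 * rexp (-(Real.pi * (1 / (k + 1))) * ‖ξ‖ ^ 2)))
      atTop (nhds (∫⁻ ξ : Eu n, ENNReal.ofReal (‖𝓕 h ξ‖ ^ 2))) := by
    set C : ℝ := ∫ x : Eu n, ‖h x‖ with hC
    have hCnn : 0 ≤ C := integral_nonneg fun x => norm_nonneg _
    have hgpos : ∀ k : ℕ, (0:ℝ) < Real.pi * (1 / (k + 1)) := fun k => by positivity
    have hint : ∀ k : ℕ, Integrable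
        (fun ξ : Eu n => ‖𝓕 h ξ‖ ^ 2 * rexp (-(Real.pi * (1 / (k + 1))) * ‖ξ‖ ^ 2)) := by
      intro k
      refine ((integrable_gauss_r (hgpos k)).const_mul (C ^ 2)).mono'
        (((Fcont.norm.pow 2).mul (by continuity)).aestronglyMeasurable)
        (Filter.Eventually.of_forall fun ξ => ?_)
      rw [Real.norm_eq_abs, abs_mul, _root_.abs_of_nonneg (by positivity : (0:ℝ) ≤ ‖𝓕 h ξ‖ ^ 2),
        _root_.abs_of_nonneg (Real.exp_nonneg _)]
      exact mul_le_mul_of_nonneg_right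
        (pow_le_pow_left₀ (norm_nonneg _) (FB ξ) 2) (Real.exp_nonneg _)
    have heq : ∀ k : ℕ,
        ENNReal.ofReal (∫ ξ : Eu n, ‖𝓕 h ξ‖ ^ 2 * rexp (-(Real.pi * (1 / (k + 1))) * ‖ξ‖ ^ 2))
          = ∫⁻ ξ : Eu n, ENNReal.ofReal
              (‖𝓕 h ξ‖ ^ 2 * rexp (-(Real.pi * (1 / (k + 1))) * ‖ξ‖ ^ 2)) := fun k =>
      MeasureTheory.ofReal_integral_eq_lintegral_ofReal (hint k)
        (Filter.Eventually.of_forall fun ξ => by positivity)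
    simp_rw [heq]
    refine lintegral_tendsto_of_tendsto_of_monotone
      (fun k => ((hint k).aestronglyMeasurable.aemeasurable).ennreal_ofReal) ?_ ?_
    · refine Filter.Eventually.of_forall fun ξ => ?_
      intro k l hkl
      apply ENNReal.ofReal_le_ofReal
      apply mul_le_mul_of_nonneg_left _ (by positivity)
      apply Real.exp_le_exp.2
      have h1 : (1 : ℝ) / (l + 1) ≤ 1 / (k + 1) := by
        apply one_div_le_one_div_of_le (by positivity)
        have : (k:ℝ) ≤ l := by exact_mod_cast hkl
        linarith
      have h2 := mul_le_mul_of_nonneg_right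
        (mul_le_mul_of_nonneg_left h1 Real.pi_pos.le) (sq_nonneg ‖ξ‖)
      linarith
    · refine Filter.Eventually.of_forall fun ξ => ?_
      have h0 : Tendsto (fun k : ℕ => (1 : ℝ) / (k + 1)) atTop (nhds 0) :=
        tendsto_one_div_add_atTop_nhds_zero_nat
      have hcont : Continuous fun t : ℝ =>
          ENNReal.ofReal (‖𝓕 h ξ‖ ^ 2 * rexp (-(Real.pi * t) * ‖ξ‖ ^ 2)) := by
        exact ENNReal.continuous_ofReal.comp (continuous_const.mul
          (Real.continuous_exp.comp
            (((continuous_const.mul continuous_id).neg).mul continuous_const)))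
      have := (hcont.tendsto 0).comp h0
      simpa [Function.comp_def] using this
  have hofreal : Tendsto (fun k : ℕ => ENNReal.ofReal
      (∫ ξ : Eu n, ‖𝓕 h ξ‖ ^ 2 * rexp (-(Real.pi * (1 / (k + 1))) * ‖ξ‖ ^ 2)))
      atTop (nhds (ENNReal.ofReal S)) := (ENNReal.continuous_ofReal.tendsto _).comp lim2
  have hL : (∫⁻ ξ : Eu n, ENNReal.ofReal (‖𝓕 h ξ‖ ^ 2)) = ENNReal.ofReal S :=
    tendsto_nhds_unique mct hofreal
  have hSnn : 0 ≤ S := integral_nonneg fun x => by positivity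
  rw [MeasureTheory.integral_eq_lintegral_of_nonneg_ae (f := fun ξ => ‖𝓕 h ξ‖ ^ 2)
    (Filter.Eventually.of_forall fun ξ => by positivity)
    ((Fcont.norm.pow 2).aestronglyMeasurable), hL, ENNReal.toReal_ofReal hSnn]

theorem FT_eq (ψ : Eu n → ℂ) (p : Eu n) :
    FT ψ p = (Real.sqrt ((2 * Real.pi) ^ n))⁻¹ • 𝓕 ψ ((2 * Real.pi)⁻¹ • p) := by
  rw [FT, Real.fourier_eq']
  congr 1
  refine integral_congr_ae (Filter.Eventually.of_forall fun x => ?_)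
  show cexp (-Complex.I * (⟪p, x⟫ : ℝ)) * ψ x = cexp (↑(-2 * π * ⟪x, (2 * π)⁻¹ • p⟫) * Complex.I) • ψ x
  rw [smul_eq_mul]
  congr 1
  rw [real_inner_smul_right]
  have hπ : (2 * Real.pi) ≠ 0 := by positivity
  have : -2 * Real.pi * ((2 * Real.pi)⁻¹ * ⟪x, p⟫) = -⟪x, p⟫ := by
    field_simp
  rw [this, real_inner_comm x p]
  push_cast
  ring

theorem FT_norm_integral (ψ : Eu n → ℂ) :
    ∫ p : Eu n, ‖FT ψ p‖ ^ 2 = ∫ p : Eu n, ‖𝓕 ψ p‖ ^ 2 := by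
  have hπ : (0:ℝ) < (2 * Real.pi) ^ n := by positivity
  have step1 : ∀ p : Eu n, ‖FT ψ p‖ ^ 2
      = ((2 * Real.pi) ^ n)⁻¹ * ‖𝓕 ψ ((2 * Real.pi)⁻¹ • p)‖ ^ 2 := by
    intro p
    rw [FT_eq, norm_smul, Real.norm_eq_abs, _root_.abs_of_nonneg
      (inv_nonneg.2 (Real.sqrt_nonneg _)), mul_pow, inv_pow, Real.sq_sqrt hπ.le]
  simp_rw [step1]
  rw [MeasureTheory.integral_const_mul]
  have := MeasureTheory.Measure.integral_comp_smul (volume : Measure (Eu n))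
      (fun p : Eu n => ‖𝓕 ψ p‖ ^ 2) ((2 * Real.pi)⁻¹)
  rw [this, finrank_euclideanSpace_fin, smul_eq_mul, ← mul_assoc]
  rw [inv_pow, inv_inv, abs_of_pos hπ, inv_mul_cancel₀ hπ.ne', one_mul]

theorem lorentz_integral (g : Eu n → ℝ) :
    ∫ p, g p ∂(lorentzMeasure n) = ∫ p : Eu n, (2 * ‖p‖)⁻¹ * g p := by
  have hmeas : Measurable fun p : Eu n => Real.toNNReal ((2 * ‖p‖)⁻¹) :=
    ((measurable_norm.const_mul 2).inv).real_toNNReal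
  have : lorentzMeasure n
      = (volume : Measure (Eu n)).withDensity
          fun p => ((Real.toNNReal ((2 * ‖p‖)⁻¹) : ℝ≥0) : ℝ≥0∞) := rfl
  rw [this, integral_withDensity_eq_integral_smul hmeas]
  congr 1
  ext p
  rw [NNReal.smul_def, Real.coe_toNNReal _ (by positivity), smul_eq_mul]

/-- For continuous compactly supported f with 0 outside the support, and
h(q) = (2‖q‖)^{−1/2} f(q): ∫ |𝓕h(p)|² dp = ∫ |f(p)|² dμ(p). Consequently the weighted
Fourier transform (U_{𝓕,ω} f)(p) = √(2‖p‖)·𝓕(q ↦ (2‖q‖)^{−1/2} f(q))(p) is isometric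
with respect to the Lorentz-invariant measure: ‖U_{𝓕,ω} f‖_{L²(μ)} = ‖f‖_{L²(μ)}. -/
theorem stmt10 {n : ℕ} (hn : 1 ≤ n) (f : Eu n → ℂ) (hf : Continuous f)
    (hfc : HasCompactSupport f) (hf0 : 0 ∉ tsupport f) :
    (∫ p : Eu n, ‖FT (fun q : Eu n => (((Real.sqrt (2 * ‖q‖))⁻¹ : ℝ) : ℂ) * f q) p‖ ^ 2)
        = ∫ p, ‖f p‖ ^ 2 ∂(lorentzMeasure n) ∧
      (∫ p : Eu n, ‖((Real.sqrt (2 * ‖p‖) : ℝ) : ℂ) *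
            FT (fun q : Eu n => (((Real.sqrt (2 * ‖q‖))⁻¹ : ℝ) : ℂ) * f q) p‖ ^ 2
          ∂(lorentzMeasure n))
        = ∫ p, ‖f p‖ ^ 2 ∂(lorentzMeasure n) := by
  set h : Eu n → ℂ := fun q => (((Real.sqrt (2 * ‖q‖))⁻¹ : ℝ) : ℂ) * f q with hh
  -- continuity of h
  have hcont : Continuous h := by
    rw [continuous_iff_continuousAt]
    intro q
    rcases eq_or_ne q 0 with rfl | hq
    · have hopen : IsOpen (tsupport f)ᶜ := (isClosed_tsupport f).isOpen_compl
      have hmem : (tsupport f)ᶜ ∈ nhds (0 : Eu n) := hopen.mem_nhds (by simpa using hf0)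
      have : h =ᶠ[nhds (0 : Eu n)] fun _ => 0 := by
        filter_upwards [hmem] with x hx
        simp [hh, image_eq_zero_of_notMem_tsupport hx]
      exact (continuousAt_congr this).2 continuousAt_const
    · have h1 : ContinuousAt (fun q : Eu n => ((Real.sqrt (2 * ‖q‖))⁻¹ : ℝ)) q := by
        apply ContinuousAt.inv₀
        · exact (Real.continuous_sqrt.comp (continuous_const.mul continuous_norm)).continuousAt
        · have : 0 < ‖q‖ := norm_pos_iff.mpr hq
          exact (Real.sqrt_pos.2 (by positivity)).ne'
      exact (Complex.continuous_ofReal.continuousAt.comp h1).mul hf.continuousAt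
  have hsupp : HasCompactSupport h := hfc.mul_left
  -- pointwise identity: (2‖p‖)⁻¹ * ‖f p‖² = ‖h p‖²
  have hpt : ∀ p : Eu n, (2 * ‖p‖)⁻¹ * ‖f p‖ ^ 2 = ‖h p‖ ^ 2 := by
    intro p
    have h2 : (0:ℝ) ≤ 2 * ‖p‖ := by positivity
    simp only [hh, norm_mul, Complex.norm_real, Real.norm_eq_abs,
      _root_.abs_of_nonneg (inv_nonneg.2 (Real.sqrt_nonneg _)), mul_pow, inv_pow,
      Real.sq_sqrt h2]
  have E1 : ∫ p, ‖f p‖ ^ 2 ∂(lorentzMeasure n) = ∫ x : Eu n, ‖h x‖ ^ 2 := by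
    rw [lorentz_integral]
    exact integral_congr_ae (Filter.Eventually.of_forall hpt)
  have E2 : (∫ p : Eu n, ‖FT h p‖ ^ 2) = ∫ p, ‖f p‖ ^ 2 ∂(lorentzMeasure n) := by
    rw [FT_norm_integral, plancherel_ccs h hcont hsupp, E1]
  refine ⟨E2, ?_⟩
  -- second part
  haveI : Nontrivial (Eu n) := by
    refine nontrivial_of_ne (EuclideanSpace.single ⟨0, hn⟩ (1:ℝ)) 0 fun hcon => ?_
    have := congrArg (fun v : Eu n => v ⟨0, hn⟩) hcon
    simp at this
  have hae : ∀ᵐ p : Eu n, p ≠ 0 := by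
    refine eventually_of_mem (compl_mem_ae_iff.mpr (measure_singleton (0 : Eu n))) ?_
    intro p hp
    simpa using hp
  have E3 : (∫ p : Eu n, ‖((Real.sqrt (2 * ‖p‖) : ℝ) : ℂ) * FT h p‖ ^ 2 ∂(lorentzMeasure n))
      = ∫ p : Eu n, ‖FT h p‖ ^ 2 := by
    rw [lorentz_integral]
    refine integral_congr_ae ?_
    filter_upwards [hae] with p hp
    have hp' : 0 < ‖p‖ := norm_pos_iff.mpr hp
    have h2 : (0:ℝ) < 2 * ‖p‖ := by positivity
    rw [norm_mul, Complex.norm_real, Real.norm_eq_abs, _root_.abs_of_nonneg (Real.sqrt_nonneg _),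
      mul_pow, Real.sq_sqrt h2.le, ← mul_assoc, inv_mul_cancel₀ h2.ne', one_mul]
  rw [E3, E2]

end
end

section
/- Let n ≥ 1 and j ∈ {1,…,n}, and let T be the densely defined linear operator in the Hilbert space L²(ℝⁿ, ℂ) whose domain is the image of the Schwartz space 𝒮(ℝⁿ) in L² and which acts by (Tψ)(x) = x_j ψ(x). Then T is symmetric and essentially self-adjoint: its closure is a self-adjoint operator (equivalently, the adjoint of T is self-adjoint). -/
open MeasureTheory Real Filter
open scoped SchwartzMap

noncomputable section

open scoped ENNReal Convolution ComplexConjugate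
open Metric Set Function ContinuousLinearMap
open scoped ContDiff

namespace Stmt12Aux

variable {n : ℕ}

/-- Compactly supported smooth functions are Schwartz maps. -/
def ofCS (f : Eu n → ℂ) (hf : ContDiff ℝ ∞ f) (h : HasCompactSupport f) : 𝓢(Eu n, ℂ) where
  toFun := f
  smooth' := hf
  decay' := by
    intro k m
    have hsupp : HasCompactSupport fun x : Eu n => ‖x‖ ^ k * ‖iteratedFDeriv ℝ m f x‖ := by
      apply HasCompactSupport.mul_left
      exact (h.iteratedFDeriv m).norm
    obtain ⟨C, hC⟩ := Continuous.bounded_above_of_compact_support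
      ((continuous_norm.pow k).mul ((hf.continuous_iteratedFDeriv (mod_cast le_top)).norm))
      hsupp
    exact ⟨C, fun x => (Real.le_norm_self _).trans (hC x)⟩

@[simp] lemma ofCS_coe (f : Eu n → ℂ) (hf : ContDiff ℝ ∞ f) (h : HasCompactSupport f) :
    ⇑(ofCS f hf h) = f := rfl

lemma memL2 (ψ : 𝓢(Eu n, ℂ)) : MemLp (⇑ψ) 2 (volume : Measure (Eu n)) := by
  rw [memLp_two_iff_integrable_sq_norm ψ.continuous.aestronglyMeasurable]
  have hint : Integrable (⇑ψ) (volume : Measure (Eu n)) := ψ.integrable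
  refine (hint.norm.const_mul (SchwartzMap.seminorm ℝ 0 0 ψ)).mono'
    ((ψ.continuous.norm.pow 2).aestronglyMeasurable) ?_
  filter_upwards with x
  have h1 := ψ.norm_le_seminorm ℝ x
  have h2 : (0:ℝ) ≤ ‖ψ x‖ := norm_nonneg _
  have h3 : ‖‖ψ x‖ ^ 2‖ = ‖ψ x‖ * ‖ψ x‖ := by
    rw [Real.norm_of_nonneg (by positivity)]; ring
  rw [h3]
  exact mul_le_mul_of_nonneg_right h1 h2

/-- Smooth compactly supported approximation in L² of a continuous compactly
supported function. -/
lemma approx_smooth {g : Eu n → ℂ} (gcont : Continuous g) (gsupp : HasCompactSupport g)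
    {δ : ℝ≥0∞} (hδ : δ ≠ 0) :
    ∃ ψ : 𝓢(Eu n, ℂ), eLpNorm (g - ⇑ψ) 2 (volume : Measure (Eu n)) ≤ δ := by
  classical
  set K : Set (Eu n) := Metric.cthickening 1 (tsupport g) with hK
  have hKc : IsCompact K := gsupp.cthickening
  have hKm : MeasurableSet K := hKc.isClosed.measurableSet
  set B : ℝ≥0∞ := (volume K) ^ (2 : ℝ≥0∞).toReal⁻¹ with hB
  have hBfin : B ≠ (∞ : ℝ≥0∞) := by
    refine (ENNReal.rpow_lt_top_of_nonneg (by positivity) hKc.measure_lt_top.ne).ne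
  -- choose ε' > 0 with B * ofReal ε' ≤ δ
  set r : ℝ≥0∞ := min δ 1 / (B + 1) with hr
  have hrpos : r ≠ 0 := by
    refine ENNReal.div_ne_zero.2 ⟨?_, by simp [hBfin]⟩
    exact (lt_min (pos_iff_ne_zero.2 hδ) zero_lt_one).ne'
  have hrfin : r ≠ (∞ : ℝ≥0∞) := by
    refine (ENNReal.div_lt_top (by simp) ?_).ne
    simp
  set ε' : ℝ := r.toReal with hε'
  have hε'pos : 0 < ε' := ENNReal.toReal_pos hrpos hrfin
  have hofReal : ENNReal.ofReal ε' = r := ENNReal.ofReal_toReal hrfin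
  have hkey : B * ENNReal.ofReal ε' ≤ δ := by
    rw [hofReal, hr]
    calc B * (min δ 1 / (B + 1)) ≤ (B + 1) * (min δ 1 / (B + 1)) := by
          exact mul_le_mul_left (le_self_add) _
      _ = min δ 1 := by
          rw [ENNReal.mul_div_cancel (by simp) (by simp [hBfin])]
      _ ≤ δ := min_le_left _ _
  -- uniform continuity
  have huc : UniformContinuous g := gsupp.uniformContinuous_of_continuous gcont
  obtain ⟨δ₀, hδ₀pos, hδ₀⟩ := Metric.uniformContinuous_iff.mp huc ε' hε'pos
  set R : ℝ := min δ₀ 1 with hR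
  have hRpos : 0 < R := lt_min hδ₀pos one_pos
  have hRle1 : R ≤ 1 := min_le_right _ _
  set φ : ContDiffBump (0 : Eu n) := ⟨R/2, R, by positivity, by linarith⟩ with hφ
  set h : Eu n → ℂ := (φ.normed volume) ⋆[lsmul ℝ ℝ, volume] g with hh
  have hsm : ContDiff ℝ ∞ h :=
    HasCompactSupport.contDiff_convolution_left _ φ.hasCompactSupport_normed
      φ.contDiff_normed gcont.locallyIntegrable
  have hcs : HasCompactSupport h :=
    HasCompactSupport.convolution _ φ.hasCompactSupport_normed gsupp
  -- pointwise distance bound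
  have hdist : ∀ x, dist (h x) (g x) ≤ ε' := by
    intro x
    refine ContDiffBump.dist_normed_convolution_le gcont.aestronglyMeasurable ?_
    intro y hy
    have hy' : dist y x < R := hy
    exact (hδ₀ (lt_of_lt_of_le hy' (min_le_left _ _))).le
  -- support of g - h inside K
  have hsupp_sub : Function.support (g - h) ⊆ K := by
    have h1 : tsupport g ⊆ K := Metric.self_subset_cthickening _
    have h2 : Function.support h ⊆ K := by
      intro x hx
      have := support_convolution_subset (lsmul ℝ ℝ) (μ := volume)
        (f := φ.normed volume) (g := g) hx
      obtain ⟨a, ha, b, hb, rfl⟩ := this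
      have ha' : ‖a‖ < 1 := by
        have : a ∈ Metric.ball (0 : Eu n) R := by
          rw [← φ.support_normed_eq (μ := volume)] at *
          exact ha
        have := mem_ball_zero_iff.mp this
        linarith [lt_of_lt_of_le this hRle1]
      refine Metric.mem_cthickening_of_dist_le _ b 1 _ (subset_tsupport g hb) ?_
      simpa [dist_eq_norm] using ha'.le
    intro x hx
    rcases Function.support_sub g h hx with hx' | hx'
    · exact h1 (subset_tsupport g hx')
    · exact h2 hx'
  -- L² bound
  have hbound : eLpNorm (g - h) 2 (volume : Measure (Eu n)) ≤ δ := by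
    have hind : g - h = K.indicator (g - h) := (Set.indicator_eq_self.2 hsupp_sub).symm
    calc eLpNorm (g - h) 2 (volume : Measure (Eu n))
        = eLpNorm (K.indicator (g - h)) 2 (volume : Measure (Eu n)) := by rw [← hind]
      _ = eLpNorm (g - h) 2 ((volume : Measure (Eu n)).restrict K) :=
          eLpNorm_indicator_eq_eLpNorm_restrict hKm
      _ ≤ ((volume : Measure (Eu n)).restrict K) Set.univ ^ (2:ℝ≥0∞).toReal⁻¹
            * ENNReal.ofReal ε' := by
          refine eLpNorm_le_of_ae_bound ?_
          filter_upwards with x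
          have := hdist x
          simpa [Pi.sub_apply, dist_eq_norm, norm_sub_rev] using this
      _ = B * ENNReal.ofReal ε' := by rw [Measure.restrict_apply_univ]
      _ ≤ δ := hkey
  exact ⟨ofCS h hsm hcs, by simpa using hbound⟩

/-- Schwartz functions (i.e. their classes) are dense in `L²`. -/
lemma schwartz_dense (n : ℕ) :
    Dense {g : Lp ℂ 2 (volume : Measure (Eu n)) |
      ∃ ψ : 𝓢(Eu n, ℂ), (g : Eu n → ℂ) =ᵐ[volume] ⇑ψ} := by
  rw [Metric.dense_iff]
  intro f ε hε
  obtain ⟨g, gsupp, hfg, gcont, gmem⟩ :=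
    (Lp.memLp f).exists_hasCompactSupport_eLpNorm_sub_le (by norm_num : (2:ℝ≥0∞) ≠ (∞ : ℝ≥0∞))
      (by simp [hε, ENNReal.ofReal_pos] : ENNReal.ofReal (ε/4) ≠ 0)
  obtain ⟨ψ, hψ⟩ := approx_smooth gcont gsupp
    (by simp [hε, ENNReal.ofReal_pos] : ENNReal.ofReal (ε/4) ≠ 0)
  set s : Lp ℂ 2 (volume : Measure (Eu n)) := (memL2 ψ).toLp ⇑ψ with hs
  have hsmem : s ∈ {g : Lp ℂ 2 (volume : Measure (Eu n)) |
      ∃ ψ : 𝓢(Eu n, ℂ), (g : Eu n → ℂ) =ᵐ[volume] ⇑ψ} := ⟨ψ, MemLp.coeFn_toLp _⟩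
  refine ⟨s, ?_, hsmem⟩
  rw [Metric.mem_ball, dist_comm, Lp.dist_def]
  have h1 : eLpNorm (⇑f - ⇑s) 2 (volume : Measure (Eu n))
      ≤ ENNReal.ofReal (ε/4) + ENNReal.ofReal (ε/4) := by
    have hae : (⇑f - ⇑s : Eu n → ℂ) =ᵐ[volume] (⇑f - g) + (g - ⇑ψ) := by
      filter_upwards [MemLp.coeFn_toLp (memL2 ψ)] with x hx
      simp only [Pi.sub_apply, Pi.add_apply, hs, hx]
      ring
    calc eLpNorm (⇑f - ⇑s) 2 (volume : Measure (Eu n))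
        = eLpNorm ((⇑f - g) + (g - ⇑ψ)) 2 (volume : Measure (Eu n)) :=
          eLpNorm_congr_ae hae
      _ ≤ eLpNorm (⇑f - g) 2 (volume : Measure (Eu n))
            + eLpNorm (g - ⇑ψ) 2 (volume : Measure (Eu n)) :=
          eLpNorm_add_le ((Lp.aestronglyMeasurable f).sub gcont.aestronglyMeasurable)
            (gcont.aestronglyMeasurable.sub ψ.continuous.aestronglyMeasurable)
            one_le_two
      _ ≤ ENNReal.ofReal (ε/4) + ENNReal.ofReal (ε/4) := add_le_add hfg hψ
  have h2 : ENNReal.ofReal (ε/4) + ENNReal.ofReal (ε/4) = ENNReal.ofReal (ε/2) := by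
    rw [← ENNReal.ofReal_add (by linarith) (by linarith)]
    congr 1
    ring
  rw [h2] at h1
  calc (eLpNorm (⇑f - ⇑s) 2 (volume : Measure (Eu n))).toReal
      ≤ (ENNReal.ofReal (ε/2)).toReal := ENNReal.toReal_mono ENNReal.ofReal_ne_top h1
    _ = ε/2 := ENNReal.toReal_ofReal (by linarith)
    _ < ε := by linarith

lemma locallyIntegrable_coord_mul (j : Fin n) {f : Eu n → ℂ}
    (hf : LocallyIntegrable f (volume : Measure (Eu n))) :
    LocallyIntegrable (fun a => ((a j : ℝ) : ℂ) * f a) (volume : Measure (Eu n)) := by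
  rw [← MeasureTheory.locallyIntegrableOn_univ] at hf ⊢
  refine hf.continuousOn_mul ?_ ?_
  · exact (Complex.continuous_ofReal.comp (EuclideanSpace.proj (𝕜 := ℝ) j).continuous).continuousOn
  · exact isOpen_univ.isLocallyClosed

end Stmt12Aux

set_option maxHeartbeats 2000000 in
/-- The coordinate multiplication operator (Tψ)(x) = x_j ψ(x), densely defined in
L²(ℝⁿ, ℂ) with domain the image of the Schwartz space, is symmetric and essentially
self-adjoint: its adjoint is a self-adjoint operator. -/
theorem stmt12 {n : ℕ} (hn : 1 ≤ n) (j : Fin n)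
    (T : (Lp ℂ 2 (volume : Measure (Eu n))) →ₗ.[ℂ] (Lp ℂ 2 (volume : Measure (Eu n))))
    (hdom : (T.domain : Set (Lp ℂ 2 (volume : Measure (Eu n))))
        = {g : Lp ℂ 2 (volume : Measure (Eu n)) |
            ∃ ψ : 𝓢(Eu n, ℂ), (g : Eu n → ℂ) =ᵐ[volume] ψ})
    (hact : ∀ (g : T.domain) (ψ : 𝓢(Eu n, ℂ)),
        ((g : Lp ℂ 2 (volume : Measure (Eu n))) : Eu n → ℂ) =ᵐ[volume] ψ →
        ((T g : Lp ℂ 2 (volume : Measure (Eu n))) : Eu n → ℂ)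
          =ᵐ[volume] fun x => (x j : ℂ) * ψ x) :
    (∀ x y : T.domain,
        (inner ℂ (T x) ((y : Lp ℂ 2 (volume : Measure (Eu n)))) : ℂ)
          = inner ℂ ((x : Lp ℂ 2 (volume : Measure (Eu n)))) (T y)) ∧
      IsSelfAdjoint T.adjoint := by
  classical
  have hd : Dense (T.domain : Set (Lp ℂ 2 (volume : Measure (Eu n)))) := by
    rw [hdom]; exact Stmt12Aux.schwartz_dense n
  -- Symmetry of `T`.
  have hsym : T.IsFormalAdjoint T := by
    intro x y
    have hx : (↑x : Lp ℂ 2 (volume : Measure (Eu n))) ∈ (T.domain : Set _) := x.2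
    have hy : (↑y : Lp ℂ 2 (volume : Measure (Eu n))) ∈ (T.domain : Set _) := y.2
    rw [hdom] at hx hy
    obtain ⟨ψ, hψ⟩ := hx
    obtain ⟨φ, hφ⟩ := hy
    rw [MeasureTheory.L2.inner_def, MeasureTheory.L2.inner_def]
    apply integral_congr_ae
    filter_upwards [hact x ψ hψ, hact y φ hφ, hψ, hφ] with a h1 h2 h3 h4
    rw [RCLike.inner_apply', RCLike.inner_apply', h1, h2, h3, h4]
    simp only [map_mul, Complex.conj_ofReal]
    ring
  -- The adjoint acts by multiplication by the coordinate.
  have hadj : ∀ f : T.adjoint.domain,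
      ((T.adjoint f : Lp ℂ 2 (volume : Measure (Eu n))) : Eu n → ℂ)
        =ᵐ[volume] fun a =>
          (a j : ℂ) * ((f : Lp ℂ 2 (volume : Measure (Eu n))) : Eu n → ℂ) a := by
    intro f
    set w : Lp ℂ 2 (volume : Measure (Eu n)) := T.adjoint f with hwdef
    set fc : Eu n → ℂ := ((f : Lp ℂ 2 (volume : Measure (Eu n))) : Eu n → ℂ) with hfc
    have hw : ∀ x : T.domain,
        (inner ℂ w (↑x : Lp ℂ 2 (volume : Measure (Eu n))) : ℂ)
          = inner ℂ (↑f : Lp ℂ 2 (volume : Measure (Eu n))) (T x) :=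
      fun x => T.adjoint_isFormalAdjoint hd f x
    have hfli : LocallyIntegrable fc (volume : Measure (Eu n)) :=
      (Lp.memLp _).locallyIntegrable one_le_two
    have hwli : LocallyIntegrable (w : Eu n → ℂ) (volume : Measure (Eu n)) :=
      (Lp.memLp _).locallyIntegrable one_le_two
    have hmfli : LocallyIntegrable (fun a : Eu n => (a j : ℂ) * fc a)
        (volume : Measure (Eu n)) := Stmt12Aux.locallyIntegrable_coord_mul j hfli
    have key : ∀ᵐ a ∂(volume : Measure (Eu n)),
        (fun a : Eu n => (a j : ℂ) * fc a - (w : Eu n → ℂ) a) a = 0 := by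
      apply ae_eq_zero_of_integral_contDiff_smul_eq_zero (hmfli.sub hwli)
      intro g gsm gsupp
      -- the test function as a Schwartz map
      set ψg : 𝓢(Eu n, ℂ) := Stmt12Aux.ofCS (fun a => ((g a : ℝ) : ℂ))
        (Complex.ofRealCLM.contDiff.comp gsm) (gsupp.comp_left Complex.ofReal_zero) with hψg
      have hmem : MemLp (⇑ψg) 2 (volume : Measure (Eu n)) := Stmt12Aux.memL2 ψg
      set xg : Lp ℂ 2 (volume : Measure (Eu n)) := hmem.toLp ⇑ψg with hxgdef
      have hxg : xg ∈ T.domain := by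
        rw [← SetLike.mem_coe, hdom]; exact ⟨ψg, MemLp.coeFn_toLp _⟩
      have hxg_ae : (xg : Eu n → ℂ) =ᵐ[volume] fun a => ((g a : ℝ) : ℂ) :=
        MemLp.coeFn_toLp _
      have hTxg := hact ⟨xg, hxg⟩ ψg hxg_ae
      have h1 := hw ⟨xg, hxg⟩
      rw [MeasureTheory.L2.inner_def, MeasureTheory.L2.inner_def] at h1
      have hLc : (∫ a, (inner ℂ ((w : Eu n → ℂ) a) ((xg : Eu n → ℂ) a) : ℂ)
            ∂(volume : Measure (Eu n)))
          = ∫ a, (starRingEnd ℂ) ((w : Eu n → ℂ) a) * ((g a : ℝ) : ℂ)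
            ∂(volume : Measure (Eu n)) := by
        refine integral_congr_ae ?_
        filter_upwards [hxg_ae] with a ha
        rw [RCLike.inner_apply', ha]
      have hRc : (∫ a, (inner ℂ (fc a)
              (((T ⟨xg, hxg⟩ : Lp ℂ 2 (volume : Measure (Eu n))) : Eu n → ℂ) a) : ℂ)
            ∂(volume : Measure (Eu n)))
          = ∫ a, (starRingEnd ℂ) (fc a) * ((a j : ℂ) * ((g a : ℝ) : ℂ))
            ∂(volume : Measure (Eu n)) := by
        refine integral_congr_ae ?_
        filter_upwards [hTxg] with a ha
        rw [RCLike.inner_apply', ha]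
        rfl
      have e1 : (∫ a, (starRingEnd ℂ) ((w : Eu n → ℂ) a) * ((g a : ℝ) : ℂ)
            ∂(volume : Measure (Eu n)))
          = ∫ a, (starRingEnd ℂ) (fc a) * ((a j : ℂ) * ((g a : ℝ) : ℂ))
            ∂(volume : Measure (Eu n)) := hLc.symm.trans (h1.trans hRc)
      have hIw : Integrable (fun a => g a • (w : Eu n → ℂ) a) (volume : Measure (Eu n)) :=
        hwli.integrable_smul_left_of_hasCompactSupport gsm.continuous gsupp
      have hImf : Integrable (fun a : Eu n => g a • ((a j : ℂ) * fc a))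
          (volume : Measure (Eu n)) :=
        hmfli.integrable_smul_left_of_hasCompactSupport gsm.continuous gsupp
      have e2 := congrArg (starRingEnd ℂ) e1
      rw [← integral_conj, ← integral_conj] at e2
      have hA : (∫ a : Eu n, g a • ((a j : ℂ) * fc a) ∂(volume : Measure (Eu n)))
          = ∫ a, (starRingEnd ℂ) ((starRingEnd ℂ) (fc a) * ((a j : ℂ) * ((g a : ℝ) : ℂ)))
            ∂(volume : Measure (Eu n)) := by
        refine integral_congr_ae (Eventually.of_forall fun a => ?_)
        simp only [map_mul, RingHomCompTriple.comp_apply, RingHom.id_apply, Complex.conj_conj,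
          Complex.conj_ofReal, Complex.real_smul]
        ring
      have hB : (∫ a, g a • (w : Eu n → ℂ) a ∂(volume : Measure (Eu n)))
          = ∫ a, (starRingEnd ℂ) ((starRingEnd ℂ) ((w : Eu n → ℂ) a) * ((g a : ℝ) : ℂ))
            ∂(volume : Measure (Eu n)) := by
        refine integral_congr_ae (Eventually.of_forall fun a => ?_)
        simp only [map_mul, Complex.conj_conj, Complex.conj_ofReal, Complex.real_smul]
        ring
      have hsplit : (∫ x, g x • (((fun a : Eu n => (a j : ℂ) * fc a) - (w : Eu n → ℂ)) x)
            ∂(volume : Measure (Eu n)))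
          = (∫ a : Eu n, g a • ((a j : ℂ) * fc a) ∂(volume : Measure (Eu n)))
            - ∫ a, g a • (w : Eu n → ℂ) a ∂(volume : Measure (Eu n)) := by
        rw [← integral_sub hImf hIw]
        refine integral_congr_ae (Eventually.of_forall fun a => ?_)
        simp [Pi.sub_apply, smul_sub]
      rw [hsplit, sub_eq_zero, hA, hB, e2]
    filter_upwards [key] with a ha
    have : (a j : ℂ) * fc a - (w : Eu n → ℂ) a = 0 := ha
    have := sub_eq_zero.mp this
    simp [this.symm]
  -- Symmetry of the adjoint.
  have hsym' : T.adjoint.IsFormalAdjoint T.adjoint := by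
    intro x y
    rw [MeasureTheory.L2.inner_def, MeasureTheory.L2.inner_def]
    apply integral_congr_ae
    filter_upwards [hadj x, hadj y] with a h1 h2
    rw [RCLike.inner_apply', RCLike.inner_apply', h1, h2]
    simp only [map_mul, Complex.conj_ofReal]
    ring
  have hle : T ≤ T.adjoint := hsym.le_adjoint hd
  have hdd : Dense (T.adjoint.domain : Set (Lp ℂ 2 (volume : Measure (Eu n)))) :=
    hd.mono hle.1
  have h1 : T.adjoint ≤ T.adjoint.adjoint := hsym'.le_adjoint hdd
  have h2 : T.adjoint.adjoint ≤ T.adjoint := by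
    refine LinearPMap.IsFormalAdjoint.le_adjoint hd ?_
    intro x y
    -- x : T.domain, y : T.adjoint.adjoint.domain
    have h3 := T.adjoint.adjoint_isFormalAdjoint hdd y ⟨(x : Lp ℂ 2 (volume : Measure (Eu n))), hle.1 x.2⟩
    have h4 : T.adjoint ⟨(x : Lp ℂ 2 (volume : Measure (Eu n))), hle.1 x.2⟩ = T x :=
      (hle.2 rfl).symm
    rw [h4] at h3
    calc (inner ℂ (T x) (↑y : Lp ℂ 2 (volume : Measure (Eu n))) : ℂ)
        = (starRingEnd ℂ) (inner ℂ (↑y : Lp ℂ 2 (volume : Measure (Eu n))) (T x)) :=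
          (inner_conj_symm _ _).symm
      _ = (starRingEnd ℂ) (inner ℂ (T.adjoint.adjoint y)
            (↑x : Lp ℂ 2 (volume : Measure (Eu n)))) := by rw [← h3]
      _ = inner ℂ (↑x : Lp ℂ 2 (volume : Measure (Eu n))) (T.adjoint.adjoint y) :=
          inner_conj_symm _ _
  exact ⟨hsym, le_antisymm h2 h1⟩

end
end
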